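/- Let κ > 0, T > 0, b ∈ ℝ, and let γ_t = A e^{κt} + B e^{-κt} satisfy γ_T = b and γ_0 = x₀. Then (1/2)∫₀^T (γ̇_s + κγ_s)^2 ds = κ(x₀ - b e^{κT})^2 / (e^{2κT} - 1). -/

import Mathlib

/-- Explicit path cost of the Ornstein–Uhlenbeck extremal `γ_t = A e^{κt} + B e^{-κt}`
from `x₀` at time 0 to `b` at time `T`:
`(1/2)∫₀ᵀ (γ̇ + κγ)² ds = κ(x₀ - b e^{κT})²/(e^{2κT} - 1)`. -/
theorem stmt10 (κ T b x₀ A B : ℝ) (hκ : 0 < κ) (hT : 0 < T)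
    (γ : ℝ → ℝ)
    (hγ : ∀ t : ℝ, γ t = A * Real.exp (κ * t) + B * Real.exp (-(κ * t)))
    (hb : γ T = b) (h0 : γ 0 = x₀) :
    (1 / 2) * ∫ t in (0:ℝ)..T, (deriv γ t + κ * γ t) ^ 2 =
      κ * (x₀ - b * Real.exp (κ * T)) ^ 2 / (Real.exp (2 * κ * T) - 1) := by
  set E := Real.exp (κ * T) with hEdef
  have hEpos : 0 < E := Real.exp_pos _
  have hE1 : 1 < E := by
    rw [hEdef]
    have : 0 < κ * T := mul_pos hκ hT
    calc 1 = Real.exp 0 := by simp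
      _ < Real.exp (κ * T) := Real.exp_lt_exp.mpr this
  have hE2 : Real.exp (2 * κ * T) = E ^ 2 := by
    rw [hEdef, ← Real.exp_nat_mul]; ring_nf
  have hE2ne : E ^ 2 - 1 ≠ 0 := by nlinarith
  -- derivative of γ
  have hγfun : γ = fun t => A * Real.exp (κ * t) + B * Real.exp (-(κ * t)) := funext hγ
  have hderiv : ∀ t : ℝ, HasDerivAt γ
      (A * (κ * Real.exp (κ * t)) + B * (-κ * Real.exp (-(κ * t)))) t := by
    intro t
    rw [hγfun]
    have h1 : HasDerivAt (fun t : ℝ => Real.exp (κ * t)) (κ * Real.exp (κ * t)) t := by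
      have := (Real.hasDerivAt_exp (κ * t)).comp t ((hasDerivAt_id t).const_mul κ)
      simpa [mul_comm, Function.comp_def, Pi.neg_apply] using this
    have h2 : HasDerivAt (fun t : ℝ => Real.exp (-(κ * t))) (-κ * Real.exp (-(κ * t))) t := by
      have := (Real.hasDerivAt_exp (-(κ * t))).comp t
        (((hasDerivAt_id t).const_mul κ).neg)
      simpa [mul_comm, Function.comp_def, Pi.neg_apply] using this
    exact (h1.const_mul A).add (h2.const_mul B)
  have hderiv' : ∀ t : ℝ, deriv γ t
      = A * (κ * Real.exp (κ * t)) + B * (-κ * Real.exp (-(κ * t))) := fun t =>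
    (hderiv t).deriv
  -- integrand simplification
  have hintegrand : ∀ t : ℝ, (deriv γ t + κ * γ t) ^ 2
      = 4 * A ^ 2 * κ ^ 2 * Real.exp (κ * t) ^ 2 := by
    intro t
    rw [hderiv' t, hγ t]; ring
  -- compute the integral via antiderivative
  have hF : ∀ t : ℝ, HasDerivAt (fun t => 2 * A ^ 2 * κ * Real.exp (κ * t) ^ 2)
      (4 * A ^ 2 * κ ^ 2 * Real.exp (κ * t) ^ 2) t := by
    intro t
    have h1 : HasDerivAt (fun t : ℝ => Real.exp (κ * t)) (κ * Real.exp (κ * t)) t := by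
      have := (Real.hasDerivAt_exp (κ * t)).comp t ((hasDerivAt_id t).const_mul κ)
      simpa [mul_comm, Function.comp_def, Pi.neg_apply] using this
    have h2 := (h1.pow 2).const_mul (2 * A ^ 2 * κ)
    refine h2.congr_deriv ?_
    ring
  have hint : (∫ t in (0:ℝ)..T, (deriv γ t + κ * γ t) ^ 2)
      = 2 * A ^ 2 * κ * (E ^ 2 - 1) := by
    have := intervalIntegral.integral_eq_sub_of_hasDerivAt
      (f := fun t => 2 * A ^ 2 * κ * Real.exp (κ * t) ^ 2)
      (f' := fun t => 4 * A ^ 2 * κ ^ 2 * Real.exp (κ * t) ^ 2)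
      (a := (0:ℝ)) (b := T)
      (fun t _ => hF t)
      (by
        apply Continuous.intervalIntegrable
        continuity)
    rw [show (∫ t in (0:ℝ)..T, (deriv γ t + κ * γ t) ^ 2)
       = ∫ t in (0:ℝ)..T, 4 * A ^ 2 * κ ^ 2 * Real.exp (κ * t) ^ 2 from by
        apply intervalIntegral.integral_congr; intro t _; exact hintegrand t]
    rw [this]
    simp [hEdef]
    ring
  -- boundary conditions
  have hx0 : x₀ = A + B := by
    rw [← h0, hγ 0]; simp
  have hbE : b * E = A * E ^ 2 + B := by
    have hinv : Real.exp (-(κ * T)) * E = 1 := by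
      rw [hEdef, ← Real.exp_add]; simp
    rw [← hb, hγ T]
    have : (A * Real.exp (κ * T) + B * Real.exp (-(κ * T))) * E
        = A * E ^ 2 + B * (Real.exp (-(κ * T)) * E) := by
      rw [hEdef]; ring
    rw [this, hinv]; ring
  have hA : A * (E ^ 2 - 1) = b * E - x₀ := by
    rw [hbE, hx0]; ring
  rw [hint, hE2]
  have hxb : x₀ - b * E = -(A * (E ^ 2 - 1)) := by rw [hA]; ring
  rw [hxb]
  field_simp
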